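/- Let K be a valued field, RV = K^×/(1+m) ∪ {0} with map rv : K → RV. Let b be a ball in an algebraically closed valued field extension, P(x) = ∏_{i<d}(x - e_i) a polynomial whose roots e_i all lie outside b. Then for any c, g ∈ b, rv(P(c)) = rv(P(g)). -/

import Mathlib

private lemma aux_prod_lt {K Γ₀ : Type*} [Field K] [LinearOrderedCommGroupWithZero Γ₀]
    (v : Valuation K Γ₀) :
    ∀ (n : ℕ) (a b : Fin n → K), (∀ i, v (a i - b i) < v (a i)) →
      v ((∏ i, a i) - ∏ i, b i) < v (∏ i, a i) := by
  intro n
  induction n with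
  | zero =>
      intro a b _
      simp
  | succ n ih =>
      intro a b h
      have hvb : ∀ i, v (b i) = v (a i) := by
        intro i
        have : v (a i - (a i - b i)) = v (a i) :=
          Valuation.map_sub_eq_of_lt_left v (h i)
        simpa using this
      have ha0 : ∀ i, v (a i) ≠ 0 := fun i => ne_of_gt (lt_of_le_of_lt zero_le' (h i))
      have key : (∏ i, a i) - ∏ i, b i
          = a 0 * ((∏ i, a (Fin.succ i)) - ∏ i, b (Fin.succ i))
            + (a 0 - b 0) * ∏ i, b (Fin.succ i) := by
        rw [Fin.prod_univ_succ a, Fin.prod_univ_succ b]; ring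
      have hprodtail : v (∏ i, a (Fin.succ i)) ≠ 0 := by
        rw [map_prod]
        exact Finset.prod_ne_zero_iff.2 fun i _ => ha0 _
      have hbtail : v (∏ i, b (Fin.succ i)) = v (∏ i, a (Fin.succ i)) := by
        rw [map_prod, map_prod]
        exact Finset.prod_congr rfl fun i _ => hvb _
      have hgoalval : v (∏ i, a i) = v (a 0) * v (∏ i, a (Fin.succ i)) := by
        rw [Fin.prod_univ_succ a, map_mul]
      have h1 : v (a 0 * ((∏ i, a (Fin.succ i)) - ∏ i, b (Fin.succ i)))
          < v (∏ i, a i) := by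
        rw [map_mul, hgoalval]
        exact mul_lt_mul_of_pos_left (ih _ _ fun i => h (Fin.succ i)) (zero_lt_iff.2 (ha0 0))
      have h2 : v ((a 0 - b 0) * ∏ i, b (Fin.succ i)) < v (∏ i, a i) := by
        rw [map_mul, hbtail, hgoalval, mul_comm (v (a 0 - b 0)), mul_comm (v (a 0))]
        exact mul_lt_mul_of_pos_left (h 0) (zero_lt_iff.2 hprodtail)
      calc v ((∏ i, a i) - ∏ i, b i)
          ≤ max (v (a 0 * ((∏ i, a (Fin.succ i)) - ∏ i, b (Fin.succ i))))
              (v ((a 0 - b 0) * ∏ i, b (Fin.succ i))) := by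
            rw [key]; exact v.map_add _ _
        _ < v (∏ i, a i) := max_lt h1 h2

/-- Leading-term computation: let `b` be a ball (open or closed) in a valued field `K`,
`P(x) = ∏_{i<d} (x - eᵢ)` a polynomial all of whose roots `eᵢ` lie outside `b`.  Then
for any `c, g ∈ b`, `rv (P c) = rv (P g)`, where `rv u = rv w` means `u = w` or
`v (u - w) < v u` (multiplicative convention, i.e. `v (u - w) > v u` additively). -/
theorem rv_eq_of_roots_outside {K Γ₀ : Type*} [Field K]
    [LinearOrderedCommGroupWithZero Γ₀]
    (v : Valuation K Γ₀) (b : Set K)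
    (hball : ∃ (c₀ : K) (γ : Γ₀),
      b = {x : K | v (x - c₀) ≤ γ} ∨ b = {x : K | v (x - c₀) < γ})
    (d : ℕ) (e : Fin d → K) (he : ∀ i, e i ∉ b)
    (c g : K) (hc : c ∈ b) (hg : g ∈ b) :
    (∏ i, (c - e i)) = (∏ i, (g - e i)) ∨
      v ((∏ i, (c - e i)) - ∏ i, (g - e i)) < v (∏ i, (c - e i)) := by
  right
  refine aux_prod_lt v d (fun i => c - e i) (fun i => g - e i) fun i => ?_
  have hkey : v (c - g) < v (c - e i) := by
    obtain ⟨c₀, γ, hb | hb⟩ := hball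
    · rw [hb] at hc hg he
      have hec : γ < v (e i - c₀) := lt_of_not_ge (he i)
      have hcg : v (c - g) ≤ γ := by
        have : c - g = (c - c₀) - (g - c₀) := by ring
        rw [this]; exact v.map_sub_le hc hg
      have : v (c - e i) = v (e i - c₀) := by
        have : c - e i = (c - c₀) - (e i - c₀) := by ring
        rw [this]
        exact Valuation.map_sub_eq_of_lt_right v (lt_of_le_of_lt hc hec)
      rw [this]; exact lt_of_le_of_lt hcg hec
    · rw [hb] at hc hg he
      have hec : γ ≤ v (e i - c₀) := le_of_not_gt (he i)
      have hcg : v (c - g) < γ := by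
        have h : c - g = (c - c₀) - (g - c₀) := by ring
        rw [h]
        exact lt_of_le_of_lt (v.map_sub _ _) (max_lt hc hg)
      have : v (c - e i) = v (e i - c₀) := by
        have h : c - e i = (c - c₀) - (e i - c₀) := by ring
        rw [h]
        exact Valuation.map_sub_eq_of_lt_right v (lt_of_lt_of_le hc hec)
      rw [this]; exact lt_of_lt_of_le hcg hec
  have h2 : (c - e i) - (g - e i) = c - g := by ring
  rw [h2]; exact hkey
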